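/- Let Q be a quotient of the identity functor on the category of groups (so Q(G) = G/F(G) for a subfunctor F of the identity) such that Q is non-trivial, i.e., Q(G₀) ≠ 1 for some group G₀. Then the essential image of Q contains either a non-trivial finite cyclic group or all free abelian groups ℤ^{⊕X} for every set X. -/

import Mathlib

open CategoryTheory

/-- A subfunctor of the identity functor on the category of groups. -/
structure GrpIdSubfunctor : Type 1 where
  sub : ∀ G : GrpCat.{0}, Subgroup G
  map_le : ∀ {G H : GrpCat.{0}} (φ : G ⟶ H), (sub G).map φ.hom ≤ sub H

/-- `H` is in the essential image of the quotient functor `G ↦ G / F(G)`: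
there is a surjection `G ↠ H` whose kernel is exactly `F(G)`. -/
def InQuotientImage (F : GrpIdSubfunctor) (H : GrpCat.{0}) : Prop :=
  ∃ (G : GrpCat.{0}) (φ : G ⟶ H),
    Function.Surjective φ ∧ MonoidHom.ker φ.hom = F.sub G

theorem stmt_18 (F : GrpIdSubfunctor) (G₀ : GrpCat.{0}) (hQ : F.sub G₀ ≠ ⊤) :
    (∃ n : ℕ, 1 < n ∧ InQuotientImage F (GrpCat.of (Multiplicative (ZMod n)))) ∨
    (∀ X : Type, InQuotientImage F (GrpCat.of (Multiplicative (FreeAbelianGroup X)))) := by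
  have SA : Subgroup (Multiplicative ℤ) := F.sub (GrpCat.of (Multiplicative ℤ))
  obtain ⟨n, hn⟩ := Int.subgroup_cyclic
    (Subgroup.toAddSubgroup' (F.sub (GrpCat.of (Multiplicative ℤ)) : Subgroup (Multiplicative ℤ)))
  rw [← AddSubgroup.zmultiples_eq_closure, ← Int.zmultiples_natAbs] at hn
  have hmem : ∀ x : Multiplicative ℤ,
      x ∈ F.sub (GrpCat.of (Multiplicative ℤ)) ↔
        Multiplicative.toAdd x ∈ AddSubgroup.zmultiples ((n.natAbs : ℤ)) := by
    intro x
    rw [← hn]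
    rfl
  obtain h0 | h1 | h2 : n.natAbs = 0 ∨ n.natAbs = 1 ∨ 2 ≤ n.natAbs := by omega
  · -- F.sub A = ⊥ : all free abelian groups in the image
    right
    intro X
    have hbot : F.sub (GrpCat.of (Multiplicative (FreeAbelianGroup X))) = ⊥ := by
      rw [eq_bot_iff]
      intro x hx
      change Multiplicative (FreeAbelianGroup X) at x
      simp only [Subgroup.mem_bot]
      have key : ∀ x₀ : X,
          ((FreeAbelianGroup.equivFinsupp X)
            (Multiplicative.toAdd (x : Multiplicative (FreeAbelianGroup X)))) x₀ = 0 := by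
        intro x₀
        set c : FreeAbelianGroup X →+ ℤ :=
          (Finsupp.applyAddHom x₀).comp (FreeAbelianGroup.equivFinsupp X).toAddMonoidHom with hc
        set ψ : Multiplicative (FreeAbelianGroup X) →* Multiplicative ℤ :=
          AddMonoidHom.toMultiplicative c with hψ
        have hmap : ψ x ∈ F.sub (GrpCat.of (Multiplicative ℤ)) :=
          F.map_le (GrpCat.ofHom ψ) (Subgroup.mem_map.mpr ⟨x, hx, rfl⟩)
        have h2 := (hmem (ψ x)).mp hmap
        rw [h0] at h2
        simp only [Nat.cast_ofNat, Nat.cast_zero, AddSubgroup.zmultiples_zero_eq_bot,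
          AddSubgroup.mem_bot] at h2
        simpa [hψ, hc] using h2
      have h3 : (FreeAbelianGroup.equivFinsupp X)
          (Multiplicative.toAdd (x : Multiplicative (FreeAbelianGroup X))) = 0 :=
        Finsupp.ext key
      have h4 : Multiplicative.toAdd (x : Multiplicative (FreeAbelianGroup X)) = 0 := by
        apply (FreeAbelianGroup.equivFinsupp X).injective
        rw [h3]
        simp
      rw [← ofAdd_toAdd x, h4, ofAdd_zero]
    refine ⟨GrpCat.of (Multiplicative (FreeAbelianGroup X)), 𝟙 _, Function.surjective_id, ?_⟩
    rw [hbot]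
    ext x
    constructor
    · intro h
      exact h
    · intro h
      exact h
  · -- F.sub A = ⊤, contradiction with hQ
    exfalso
    apply hQ
    rw [eq_top_iff]
    intro g _
    have h := F.map_le (GrpCat.ofHom (zpowersHom G₀ g))
    have hg : (Multiplicative.ofAdd (1 : ℤ)) ∈ F.sub (GrpCat.of (Multiplicative ℤ)) := by
      rw [hmem, h1]
      exact AddSubgroup.mem_zmultiples (1 : ℤ)
    refine h (Subgroup.mem_map.mpr ⟨Multiplicative.ofAdd (1 : ℤ), hg, ?_⟩)
    show zpowersHom G₀ g (Multiplicative.ofAdd (1 : ℤ)) = g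
    simp
  · -- cyclic case
    left
    refine ⟨n.natAbs, h2, GrpCat.of (Multiplicative ℤ),
      GrpCat.ofHom (AddMonoidHom.toMultiplicative (Int.castAddHom (ZMod n.natAbs))), ?_, ?_⟩
    · intro y
      obtain ⟨k, hk⟩ := ZMod.intCast_surjective (Multiplicative.toAdd (y : Multiplicative (ZMod n.natAbs)))
      exact ⟨Multiplicative.ofAdd k, by
        change Multiplicative.ofAdd ((k : ZMod n.natAbs)) = y
        rw [hk]
        rfl⟩
    · ext x
      rw [MonoidHom.mem_ker, hmem, ← ZMod.ker_intCastAddHom, AddMonoidHom.mem_ker]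
      constructor
      · intro h
        exact congrArg Multiplicative.toAdd h
      · intro h
        simpa using congrArg Multiplicative.ofAdd h
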